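/- For every η ∈ ℝ and every unit vector n ∈ 𝕊², the fourth moment M⁽⁴⁾_{αβγμ} = ∫_{𝕊²} m_α m_β m_γ m_μ h_{η,n}(m) dσ(m) satisfies, for all indices α,β,γ,μ ∈ {1,2,3}: M⁽⁴⁾_{αβγμ} = S₄ n_α n_β n_γ n_μ + ((S₂ − S₄)/7)(n_α n_β δ_{γμ} + n_γ n_μ δ_{αβ} + n_α n_γ δ_{βμ} + n_β n_μ δ_{αγ} + n_α n_μ δ_{βγ} + n_β n_γ δ_{αμ}) + (S₄/35 − 2S₂/21 + 1/15)(δ_{αβ}δ_{γμ} + δ_{αγ}δ_{βμ} + δ_{αμ}δ_{βγ}), where S₂ = ∫_{𝕊²} P₂(m·n) h_{η,n} dσ, S₄ = ∫_{𝕊²} P₄(m·n) h_{η,n} dσ, P₂(t) = (3t² − 1)/2 and P₄(t) = (35t⁴ − 30t² + 3)/8. -/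

import Mathlib

open MeasureTheory Real
open Pointwise

noncomputable section

abbrev E3 : Type := EuclideanSpace ℝ (Fin 3)
abbrev S2 : Type := Metric.sphere (0 : E3) 1

/-- The standard (rotation-invariant) surface measure on 𝕊², of total mass 4π. -/
noncomputable def sigma3 : Measure S2 := (volume : Measure E3).toSphere

/-- The family `h_{η,n}(m) = e^{η (m·n)²} / ∫ e^{η (m'·n)²} dσ(m')`. -/
noncomputable def hdens (η : ℝ) (n : S2) (m : S2) : ℝ :=
  Real.exp (η * (inner ℝ (m : E3) (n : E3) : ℝ) ^ 2) /
    ∫ m' : S2, Real.exp (η * (inner ℝ (m' : E3) (n : E3) : ℝ) ^ 2) ∂sigma3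

/-- The Legendre polynomial `P₂(t) = (3t² − 1)/2`. -/
noncomputable def P2 (t : ℝ) : ℝ := (3 * t ^ 2 - 1) / 2

/-- The Legendre polynomial `P₄(t) = (35t⁴ − 30t² + 3)/8`. -/
noncomputable def P4 (t : ℝ) : ℝ := (35 * t ^ 4 - 30 * t ^ 2 + 3) / 8

/-- The order parameter `S₂ = ∫ P₂(m·n) h_{η,n}(m) dσ(m)`. -/
noncomputable def Sord2 (η : ℝ) (n : S2) : ℝ :=
  ∫ m : S2, P2 (inner ℝ (m : E3) (n : E3) : ℝ) * hdens η n m ∂sigma3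

/-- The order parameter `S₄ = ∫ P₄(m·n) h_{η,n}(m) dσ(m)`. -/
noncomputable def Sord4 (η : ℝ) (n : S2) : ℝ :=
  ∫ m : S2, P4 (inner ℝ (m : E3) (n : E3) : ℝ) * hdens η n m ∂sigma3

/-- The Kronecker delta `δ_{ij}`. -/
noncomputable def kron (i j : Fin 3) : ℝ := if i = j then 1 else 0

namespace Stmt16

/-- map of the sphere induced by a linear isometry equivalence -/
def smap (f : E3 ≃ₗᵢ[ℝ] E3) (m : S2) : S2 :=
  ⟨f m, by
    have h := mem_sphere_zero_iff_norm.mp m.2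
    simp [mem_sphere_zero_iff_norm, f.norm_map, h]⟩

@[simp] lemma smap_coe (f : E3 ≃ₗᵢ[ℝ] E3) (m : S2) : (smap f m : E3) = f (m : E3) := rfl

lemma smap_cont (f : E3 ≃ₗᵢ[ℝ] E3) : Continuous (smap f) :=
  Continuous.subtype_mk (f.continuous.comp continuous_subtype_val) _

def smapE (f : E3 ≃ₗᵢ[ℝ] E3) : S2 ≃ᵐ S2 where
  toFun := smap f
  invFun := smap f.symm
  left_inv := fun m => by ext1; simp
  right_inv := fun m => by ext1; simp
  measurable_toFun := (smap_cont f).measurable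
  measurable_invFun := (smap_cont f.symm).measurable

lemma sigma3_map (f : E3 ≃ₗᵢ[ℝ] E3) : sigma3.map (smap f) = sigma3 := by
  refine Measure.ext fun s hs => ?_
  rw [Measure.map_apply (smap_cont f).measurable hs]
  rw [sigma3, Measure.toSphere_apply' _ hs,
    Measure.toSphere_apply' _ ((smap_cont f).measurable hs)]
  have h1 : (Subtype.val '' (smap f ⁻¹' s) : Set E3) = f ⁻¹' (Subtype.val '' s) := by
    ext x
    constructor
    · rintro ⟨m, hm, rfl⟩
      exact ⟨smap f m, hm, rfl⟩
    · rintro ⟨m', hm', hx⟩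
      have hxs : x ∈ Metric.sphere (0:E3) 1 := by
        have h1 : ‖(m' : E3)‖ = 1 := mem_sphere_zero_iff_norm.mp m'.2
        rw [hx] at h1
        rw [mem_sphere_zero_iff_norm, ← f.norm_map]; exact h1
      refine ⟨⟨x, hxs⟩, ?_, rfl⟩
      show smap f ⟨x, hxs⟩ ∈ s
      rw [show smap f ⟨x, hxs⟩ = m' from by ext1; simp [hx]]
      exact hm'
  rw [h1]
  have h2 : Set.Ioo (0:ℝ) 1 • (f ⁻¹' (Subtype.val '' s)) =
      f ⁻¹' (Set.Ioo (0:ℝ) 1 • (Subtype.val '' s)) := by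
    ext x
    constructor
    · rintro ⟨c, hc, y, hy, rfl⟩
      exact ⟨c, hc, f y, hy, (f.map_smul c y).symm⟩
    · rintro ⟨c, hc, y, hy, hxy⟩
      refine ⟨c, hc, f.symm y, ?_, ?_⟩
      · show f.symm y ∈ f ⁻¹' (Subtype.val '' s)
        simp only [Set.mem_preimage, f.apply_symm_apply]
        exact hy
      · have hx := congrArg f.symm hxy
        simp only [LinearIsometryEquiv.symm_apply_apply] at hx
        rw [← hx]
        exact (f.symm.map_smul c y).symm
  rw [h2]
  congr 1
  have hmap : (volume : Measure E3).map (f.toHomeomorph.toMeasurableEquiv) = volume := by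
    have : ⇑(f.toHomeomorph.toMeasurableEquiv) = ⇑f := rfl
    rw [this]
    exact f.measurePreserving.map_eq
  calc (volume : Measure E3) (⇑f ⁻¹' (Set.Ioo (0:ℝ) 1 • (Subtype.val '' s)))
      = (volume : Measure E3) (⇑f.toHomeomorph.toMeasurableEquiv ⁻¹' (Set.Ioo (0:ℝ) 1 • (Subtype.val '' s))) := rfl
    _ = ((volume : Measure E3).map f.toHomeomorph.toMeasurableEquiv) (Set.Ioo (0:ℝ) 1 • (Subtype.val '' s)) :=
        (MeasurableEquiv.map_apply _ _).symm
    _ = volume (Set.Ioo (0:ℝ) 1 • (Subtype.val '' s)) := by rw [hmap]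

lemma smap_mp (f : E3 ≃ₗᵢ[ℝ] E3) : MeasurePreserving (smap f) sigma3 sigma3 :=
  ⟨(smap_cont f).measurable, sigma3_map f⟩

lemma integral_smap (f : E3 ≃ₗᵢ[ℝ] E3) (F : S2 → ℝ) :
    ∫ m, F (smap f m) ∂sigma3 = ∫ m, F m ∂sigma3 :=
  (smap_mp f).integral_comp (smapE f).measurableEmbedding F

/-- negation of the k-th coordinate, as a linear isometry equivalence -/
def negIso (k : Fin 3) : E3 ≃ₗᵢ[ℝ] E3 :=
  LinearEquiv.isometryOfInner
    { toFun := fun x => WithLp.toLp 2 (fun i => if i = k then -(x i) else x i)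
      invFun := fun x => WithLp.toLp 2 (fun i => if i = k then -(x i) else x i)
      map_add' := by
        intro x y; ext i; by_cases h : i = k <;> simp [h] <;> ring
      map_smul' := by
        intro c x; ext i; by_cases h : i = k <;> simp [h] <;> ring
      left_inv := by intro x; ext i; by_cases h : i = k <;> simp [h]
      right_inv := by intro x; ext i; by_cases h : i = k <;> simp [h] }
    (by
      intro x y
      simp only [LinearEquiv.coe_mk, PiLp.inner_apply, RCLike.inner_apply, conj_trivial]
      refine Finset.sum_congr rfl fun i _ => ?_
      by_cases h : i = k <;> simp [h] <;> ring)

lemma negIso_apply (k : Fin 3) (x : E3) (i : Fin 3) :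
    (negIso k x) i = if i = k then -(x i) else x i := rfl

/-- rotation by (c,d) in the (0,1)-plane -/
def rotIso (c d : ℝ) (h : c ^ 2 + d ^ 2 = 1) : E3 ≃ₗᵢ[ℝ] E3 :=
  LinearEquiv.isometryOfInner
    { toFun := fun x => WithLp.toLp 2 (fun i : Fin 3 => if i = 0 then c * x 0 - d * x 1
        else if i = 1 then d * x 0 + c * x 1 else x 2)
      invFun := fun x => WithLp.toLp 2 (fun i : Fin 3 => if i = 0 then c * x 0 + d * x 1
        else if i = 1 then - d * x 0 + c * x 1 else x 2)
      map_add' := by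
        intro x y; ext i
        fin_cases i <;> simp <;> ring
      map_smul' := by
        intro t x; ext i
        fin_cases i <;> simp <;> ring
      left_inv := by
        intro x; ext i
        fin_cases i <;> simp <;> try linear_combination (x 0) * h
        · linear_combination (x 1) * h
      right_inv := by
        intro x; ext i
        fin_cases i <;> simp <;> try linear_combination (x 0) * h
        · linear_combination (x 1) * h }
    (by
      intro x y
      simp only [LinearEquiv.coe_mk, PiLp.inner_apply, RCLike.inner_apply, conj_trivial]
      rw [Fin.sum_univ_three, Fin.sum_univ_three]
      simp only [LinearEquiv.coe_mk, LinearMap.coe_mk, AddHom.coe_mk, WithLp.ofLp_toLp, Fin.reduceEq,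
        reduceIte, if_true, if_false]
      norm_num
      linear_combination (x 0 * y 0 + x 1 * y 1) * h)

lemma rotIso_apply (c d : ℝ) (h : c ^ 2 + d ^ 2 = 1) (x : E3) (i : Fin 3) :
    (rotIso c d h x) i = if i = 0 then c * x 0 - d * x 1
      else if i = 1 then d * x 0 + c * x 1 else x 2 := rfl

instance : IsFiniteMeasure sigma3 :=
  inferInstanceAs (IsFiniteMeasure (volume : Measure E3).toSphere)

lemma intC {g : S2 → ℝ} (hg : Continuous g) : Integrable g sigma3 := by
  rw [← integrableOn_univ]
  exact hg.continuousOn.integrableOn_compact isCompact_univ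

lemma contCoord (i : Fin 3) : Continuous (fun m : S2 => (m : E3) i) :=
  (EuclideanSpace.proj i).continuous.comp continuous_subtype_val

lemma sphere_sum_sq (m : S2) :
    (m : E3) 0 ^ 2 + (m : E3) 1 ^ 2 + (m : E3) 2 ^ 2 = 1 := by
  have h : ‖(m : E3)‖ = 1 := mem_sphere_zero_iff_norm.mp m.2
  have h2 : (inner ℝ (m : E3) (m : E3) : ℝ) = 1 := by
    rw [real_inner_self_eq_norm_mul_norm, h]; norm_num
  rw [PiLp.inner_apply] at h2
  simp only [RCLike.inner_apply, conj_trivial] at h2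
  rw [Fin.sum_univ_three] at h2
  linear_combination h2

def e2 : E3 := EuclideanSpace.single (2 : Fin 3) (1 : ℝ)

variable (η : ℝ) (n : S2)

def Q : E3 ≃ₗᵢ[ℝ] E3 := Submodule.reflection (ℝ ∙ (e2 - (n : E3)))ᗮ

lemma Q_e2 : Q n e2 = (n : E3) := by
  apply Submodule.reflection_sub
  have h1 : ‖e2‖ = 1 := by simp [e2, EuclideanSpace.norm_single]
  have h2 : ‖(n : E3)‖ = 1 := mem_sphere_zero_iff_norm.mp n.2
  rw [h1, h2]

def Z : ℝ := ∫ m' : S2, Real.exp (η * (inner ℝ (m' : E3) (n : E3) : ℝ) ^ 2) ∂sigma3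

def W (m : S2) : ℝ := Real.exp (η * ((m : E3) 2) ^ 2) / Z η n

lemma contW : Continuous (W η n) :=
  ((Real.continuous_exp.comp (continuous_const.mul ((contCoord 2).pow 2)))).div_const _

def Tmom (i j k l : Fin 3) : ℝ :=
  ∫ m : S2, (m : E3) i * (m : E3) j * (m : E3) k * (m : E3) l * W η n m ∂sigma3

def A2 : ℝ := ∫ m : S2, ((m : E3) 2) ^ 2 * W η n m ∂sigma3
def A4 : ℝ := ∫ m : S2, ((m : E3) 2) ^ 4 * W η n m ∂sigma3
def A0 : ℝ := ∫ m : S2, W η n m ∂sigma3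

lemma intT (i j k l : Fin 3) :
    Integrable (fun m : S2 => (m : E3) i * (m : E3) j * (m : E3) k * (m : E3) l * W η n m)
      sigma3 :=
  intC (((((contCoord i).mul (contCoord j)).mul (contCoord k)).mul (contCoord l)).mul (contW η n))

/-- transformation of fourth moments under a weight-preserving isometry -/
lemma mom_transform (f : E3 ≃ₗᵢ[ℝ] E3) (hf : ∀ x : E3, ((f x) 2) ^ 2 = (x 2) ^ 2)
    (i j k l : Fin 3) :
    Tmom η n i j k l =
      ∫ m : S2, (f (m : E3)) i * (f (m : E3)) j * (f (m : E3)) k * (f (m : E3)) l * W η n m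
        ∂sigma3 := by
  rw [Tmom, ← integral_smap f
    (fun m : S2 => (m : E3) i * (m : E3) j * (m : E3) k * (m : E3) l * W η n m)]
  refine integral_congr_ae (Filter.Eventually.of_forall fun m => ?_)
  simp only [smap_coe]
  congr 1
  simp only [W, smap_coe]
  rw [hf (m : E3)]

def sgn (c a : Fin 3) : ℝ := if a = c then -1 else 1

lemma negIso_two_sq (c : Fin 3) : ∀ x : E3, ((negIso c x) 2) ^ 2 = (x 2) ^ 2 := by
  intro x
  rw [negIso_apply]
  by_cases h : (2 : Fin 3) = c <;> simp [h]

lemma Tmom_sign (c : Fin 3) (i j k l : Fin 3) :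
    Tmom η n i j k l = (sgn c i * sgn c j * sgn c k * sgn c l) * Tmom η n i j k l := by
  have key : ∀ (x : E3) (a : Fin 3), (negIso c x) a = sgn c a * x a := by
    intro x a
    rw [negIso_apply, sgn]
    by_cases h : a = c <;> simp [h]
  calc Tmom η n i j k l
      = ∫ m : S2, (negIso c (m : E3)) i * (negIso c (m : E3)) j * (negIso c (m : E3)) k *
          (negIso c (m : E3)) l * W η n m ∂sigma3 :=
        mom_transform η n (negIso c) (negIso_two_sq c) i j k l
    _ = ∫ m : S2, (sgn c i * sgn c j * sgn c k * sgn c l) *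
          ((m : E3) i * (m : E3) j * (m : E3) k * (m : E3) l * W η n m) ∂sigma3 := by
        refine integral_congr_ae (Filter.Eventually.of_forall fun m => ?_)
        dsimp only
        rw [key, key, key, key]; ring
    _ = (sgn c i * sgn c j * sgn c k * sgn c l) * Tmom η n i j k l :=
        integral_const_mul _ _

lemma Tmom_zero (c : Fin 3) (i j k l : Fin 3)
    (h : sgn c i * sgn c j * sgn c k * sgn c l = -1) : Tmom η n i j k l = 0 := by
  have h2 := Tmom_sign η n c i j k l
  rw [h] at h2
  linarith

def swIso : E3 ≃ₗᵢ[ℝ] E3 := (rotIso 0 1 (by norm_num)).trans (negIso 0)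

def sw : Fin 3 → Fin 3 := fun a => if a = 0 then 1 else if a = 1 then 0 else 2

lemma swIso_apply (x : E3) (a : Fin 3) : (swIso x) a = x (sw a) := by
  fin_cases a <;>
    simp [swIso, LinearIsometryEquiv.trans_apply, negIso_apply, rotIso_apply, sw]

lemma Tmom_swap (i j k l : Fin 3) :
    Tmom η n i j k l = Tmom η n (sw i) (sw j) (sw k) (sw l) := by
  calc Tmom η n i j k l
      = ∫ m : S2, (swIso (m : E3)) i * (swIso (m : E3)) j * (swIso (m : E3)) k *
          (swIso (m : E3)) l * W η n m ∂sigma3 :=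
        mom_transform η n swIso (fun x => by simp [swIso_apply, sw]) i j k l
    _ = Tmom η n (sw i) (sw j) (sw k) (sw l) := by
        refine integral_congr_ae (Filter.Eventually.of_forall fun m => ?_)
        dsimp only
        rw [swIso_apply, swIso_apply, swIso_apply, swIso_apply]

lemma int2 (g1 g2 : S2 → ℝ) (c1 c2 : ℝ) (h1 : Integrable g1 sigma3)
    (h2 : Integrable g2 sigma3) :
    ∫ m, (c1 * g1 m + c2 * g2 m) ∂sigma3 = c1 * ∫ m, g1 m ∂sigma3 + c2 * ∫ m, g2 m ∂sigma3 := by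
  rw [integral_add (h1.const_mul c1) (h2.const_mul c2), integral_const_mul, integral_const_mul]

lemma int3 (g1 g2 g3 : S2 → ℝ) (c1 c2 c3 : ℝ) (h1 : Integrable g1 sigma3)
    (h2 : Integrable g2 sigma3) (h3 : Integrable g3 sigma3) :
    ∫ m, (c1 * g1 m + c2 * g2 m + c3 * g3 m) ∂sigma3 =
      c1 * ∫ m, g1 m ∂sigma3 + c2 * ∫ m, g2 m ∂sigma3 + c3 * ∫ m, g3 m ∂sigma3 := by
  have hA : Integrable (fun m => c1 * g1 m + c2 * g2 m) sigma3 :=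
    (h1.const_mul c1).add (h2.const_mul c2)
  rw [integral_add hA (h3.const_mul c3), integral_const_mul, int2 g1 g2 c1 c2 h1 h2]

lemma int5 (g1 g2 g3 g4 g5 : S2 → ℝ) (c1 c2 c3 c4 c5 : ℝ) (h1 : Integrable g1 sigma3)
    (h2 : Integrable g2 sigma3) (h3 : Integrable g3 sigma3) (h4 : Integrable g4 sigma3)
    (h5 : Integrable g5 sigma3) :
    ∫ m, (c1 * g1 m + c2 * g2 m + c3 * g3 m + c4 * g4 m + c5 * g5 m) ∂sigma3 =
      c1 * ∫ m, g1 m ∂sigma3 + c2 * ∫ m, g2 m ∂sigma3 + c3 * ∫ m, g3 m ∂sigma3 +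
      c4 * ∫ m, g4 m ∂sigma3 + c5 * ∫ m, g5 m ∂sigma3 := by
  have hA : Integrable (fun m => c1 * g1 m + c2 * g2 m + c3 * g3 m) sigma3 :=
    ((h1.const_mul c1).add (h2.const_mul c2)).add (h3.const_mul c3)
  have hB : Integrable (fun m => c1 * g1 m + c2 * g2 m + c3 * g3 m + c4 * g4 m) sigma3 :=
    hA.add (h4.const_mul c4)
  rw [integral_add hB (h5.const_mul c5), integral_add hA (h4.const_mul c4),
    integral_const_mul, integral_const_mul, int3 g1 g2 g3 c1 c2 c3 h1 h2 h3]

lemma Qinner (x : E3) : (inner ℝ (Q n x) (n : E3) : ℝ) = x 2 := by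
  conv_lhs => rw [← Q_e2 n]
  rw [LinearIsometryEquiv.inner_map_map]
  simp [e2, EuclideanSpace.inner_single_right]

lemma sigma3_univ_pos : 0 < (sigma3 Set.univ).toReal := by
  have hu : sigma3 Set.univ = (3 : ℕ) * volume (Metric.ball (0 : E3) 1) := by
    rw [sigma3, Measure.toSphere_apply_univ, finrank_euclideanSpace_fin]
  refine ENNReal.toReal_pos ?_ (measure_ne_top _ _)
  rw [hu]
  exact (ENNReal.mul_pos (by norm_num) (Metric.measure_ball_pos volume (0:E3) one_pos).ne').ne'

lemma Z_pos : 0 < Z η n := by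
  have hle : ∀ m : S2, rexp (-|η|) ≤ rexp (η * (inner ℝ (m : E3) (n : E3) : ℝ) ^ 2) := by
    intro m
    apply Real.exp_le_exp.mpr
    have h1 : |(inner ℝ (m : E3) (n : E3) : ℝ)| ≤ 1 := by
      have := abs_real_inner_le_norm (m : E3) (n : E3)
      rwa [mem_sphere_zero_iff_norm.mp m.2, mem_sphere_zero_iff_norm.mp n.2, mul_one] at this
    have h2 : (inner ℝ (m : E3) (n : E3) : ℝ) ^ 2 ≤ 1 := by
      rw [← sq_abs]; nlinarith [abs_nonneg (inner ℝ (m : E3) (n : E3) : ℝ)]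
    cases' abs_cases η with h h <;> nlinarith [sq_nonneg (inner ℝ (m : E3) (n : E3) : ℝ)]
  have hint : Integrable (fun m : S2 => rexp (η * (inner ℝ (m : E3) (n : E3) : ℝ) ^ 2)) sigma3 := by
    apply intC
    exact Real.continuous_exp.comp (continuous_const.mul ((Continuous.pow
      (continuous_inner.comp ((continuous_subtype_val).prodMk continuous_const)) 2)))
  have hmono := integral_mono (integrable_const (rexp (-|η|))) hint
    (fun m => hle m)
  rw [integral_const] at hmono
  calc (0 : ℝ) < (sigma3 Set.univ).toReal • rexp (-|η|) := by
        rw [smul_eq_mul]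
        exact mul_pos (sigma3_univ_pos) (Real.exp_pos _)
    _ ≤ Z η n := hmono

lemma hZ : Z η n = ∫ m : S2, rexp (η * ((m : E3) 2) ^ 2) ∂sigma3 := by
  rw [Z, ← integral_smap (Q n)
    (fun m : S2 => Real.exp (η * (inner ℝ (m : E3) (n : E3) : ℝ) ^ 2))]
  refine integral_congr_ae (Filter.Eventually.of_forall fun m => ?_)
  dsimp only
  rw [smap_coe, Qinner]

lemma A0_one : A0 η n = 1 := by
  have h1 : A0 η n = (1 / Z η n) * ∫ m : S2, rexp (η * ((m : E3) 2) ^ 2) ∂sigma3 := by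
    rw [A0, ← integral_const_mul]
    refine integral_congr_ae (Filter.Eventually.of_forall fun m => ?_)
    dsimp only [W]; ring
  rw [h1, ← hZ η n]
  field_simp [(Z_pos η n).ne']

def pc : ℝ := (1 - 2 * A2 η n + A4 η n) / 8
def qc : ℝ := (A2 η n - A4 η n) / 2
def rc : ℝ := A4 η n

lemma intA2 : Integrable (fun m : S2 => ((m : E3) 2) ^ 2 * W η n m) sigma3 :=
  intC (((contCoord 2).pow 2).mul (contW η n))

lemma intA4 : Integrable (fun m : S2 => ((m : E3) 2) ^ 4 * W η n m) sigma3 :=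
  intC (((contCoord 2).pow 4).mul (contW η n))

lemma e2' : A0 η n - 2 * A2 η n + A4 η n =
    Tmom η n 0 0 0 0 + 2 * Tmom η n 0 0 1 1 + Tmom η n 1 1 1 1 := by
  have hL := int3 (W η n) (fun m : S2 => ((m : E3) 2) ^ 2 * W η n m)
    (fun m : S2 => ((m : E3) 2) ^ 4 * W η n m) 1 (-2) 1
    (intC (contW η n)) (intA2 η n) (intA4 η n)
  have hR := int3
    (fun m : S2 => (m : E3) 0 * (m : E3) 0 * (m : E3) 0 * (m : E3) 0 * W η n m)
    (fun m : S2 => (m : E3) 0 * (m : E3) 0 * (m : E3) 1 * (m : E3) 1 * W η n m)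
    (fun m : S2 => (m : E3) 1 * (m : E3) 1 * (m : E3) 1 * (m : E3) 1 * W η n m)
    1 2 1 (intT η n 0 0 0 0) (intT η n 0 0 1 1) (intT η n 1 1 1 1)
  have hpt : (fun m : S2 => 1 * W η n m + (-2) * (((m : E3) 2) ^ 2 * W η n m) +
        1 * (((m : E3) 2) ^ 4 * W η n m)) =
      (fun m : S2 => 1 * ((m : E3) 0 * (m : E3) 0 * (m : E3) 0 * (m : E3) 0 * W η n m) +
        2 * ((m : E3) 0 * (m : E3) 0 * (m : E3) 1 * (m : E3) 1 * W η n m) +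
        1 * ((m : E3) 1 * (m : E3) 1 * (m : E3) 1 * (m : E3) 1 * W η n m)) := by
    funext m
    have h := sphere_sum_sq m
    linear_combination (-(W η n m) * (1 - ((m : E3) 2) ^ 2 + ((m : E3) 0) ^ 2
      + ((m : E3) 1) ^ 2)) * h
  rw [hpt] at hL
  unfold A0 A2 A4 Tmom
  linarith [hL, hR]

lemma e3' : A2 η n - A4 η n = Tmom η n 0 0 2 2 + Tmom η n 1 1 2 2 := by
  have hL := int2 (fun m : S2 => ((m : E3) 2) ^ 2 * W η n m)
    (fun m : S2 => ((m : E3) 2) ^ 4 * W η n m) 1 (-1) (intA2 η n) (intA4 η n)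
  have hR := int2
    (fun m : S2 => (m : E3) 0 * (m : E3) 0 * (m : E3) 2 * (m : E3) 2 * W η n m)
    (fun m : S2 => (m : E3) 1 * (m : E3) 1 * (m : E3) 2 * (m : E3) 2 * W η n m)
    1 1 (intT η n 0 0 2 2) (intT η n 1 1 2 2)
  have hpt : (fun m : S2 => 1 * (((m : E3) 2) ^ 2 * W η n m) +
        (-1) * (((m : E3) 2) ^ 4 * W η n m)) =
      (fun m : S2 => 1 * ((m : E3) 0 * (m : E3) 0 * (m : E3) 2 * (m : E3) 2 * W η n m) +
        1 * ((m : E3) 1 * (m : E3) 1 * (m : E3) 2 * (m : E3) 2 * W η n m)) := by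
    funext m
    have h := sphere_sum_sq m
    linear_combination (-(W η n m) * ((m : E3) 2) ^ 2) * h
  rw [hpt] at hL
  unfold A2 A4 Tmom
  linarith [hL, hR]

def c45 : ℝ := Real.sqrt 2 / 2

lemma c45_sq : c45 ^ 2 = 1 / 2 := by
  rw [c45, div_pow, Real.sq_sqrt (by norm_num : (2:ℝ) ≥ 0)]
  norm_num

def rot45 : E3 ≃ₗᵢ[ℝ] E3 := rotIso c45 c45 (by rw [c45_sq]; norm_num)

lemma r45 : Tmom η n 0 0 0 0 =
    1/4 * Tmom η n 0 0 0 0 + (-1) * Tmom η n 0 0 0 1 + 3/2 * Tmom η n 0 0 1 1 +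
    (-1) * Tmom η n 0 1 1 1 + 1/4 * Tmom η n 1 1 1 1 := by
  have h1 := mom_transform η n rot45
    (fun x => by rw [rot45, rotIso_apply]; simp) 0 0 0 0
  have hpt : (fun m : S2 => (rot45 (m : E3)) 0 * (rot45 (m : E3)) 0 * (rot45 (m : E3)) 0 *
        (rot45 (m : E3)) 0 * W η n m) =
      (fun m : S2 =>
        1/4 * ((m : E3) 0 * (m : E3) 0 * (m : E3) 0 * (m : E3) 0 * W η n m) +
        (-1) * ((m : E3) 0 * (m : E3) 0 * (m : E3) 0 * (m : E3) 1 * W η n m) +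
        3/2 * ((m : E3) 0 * (m : E3) 0 * (m : E3) 1 * (m : E3) 1 * W η n m) +
        (-1) * ((m : E3) 0 * (m : E3) 1 * (m : E3) 1 * (m : E3) 1 * W η n m) +
        1/4 * ((m : E3) 1 * (m : E3) 1 * (m : E3) 1 * (m : E3) 1 * W η n m)) := by
    funext m
    rw [rot45, rotIso_apply]
    norm_num
    linear_combination (W η n m * (((m : E3) 0 - (m : E3) 1) ^ 4 * (c45 ^ 2 + 1/2))) * c45_sq
  rw [hpt] at h1
  conv_lhs => rw [h1]
  rw [int5 _ _ _ _ _ _ _ _ _ _ (intT η n 0 0 0 0) (intT η n 0 0 0 1) (intT η n 0 0 1 1)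
    (intT η n 0 1 1 1) (intT η n 1 1 1 1)]
  rfl

lemma hT0011 : Tmom η n 0 0 1 1 = pc η n := by
  have h1 := r45 η n
  have hz1 := Tmom_zero η n 1 0 0 0 1 (by norm_num [sgn, Fin.ext_iff])
  have hz2 := Tmom_zero η n 0 0 1 1 1 (by norm_num [sgn, Fin.ext_iff])
  have hs := Tmom_swap η n 0 0 0 0
  simp only [sw] at hs
  simp at hs
  have he := e2' η n
  have hA := A0_one η n
  unfold pc
  linarith

lemma hT0000 : Tmom η n 0 0 0 0 = 3 * pc η n := by
  have h1 := r45 η n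
  have hz1 := Tmom_zero η n 1 0 0 0 1 (by norm_num [sgn, Fin.ext_iff])
  have hz2 := Tmom_zero η n 0 0 1 1 1 (by norm_num [sgn, Fin.ext_iff])
  have hs := Tmom_swap η n 0 0 0 0
  simp only [sw] at hs
  simp at hs
  have h2 := hT0011 η n
  linarith

lemma hT1111 : Tmom η n 1 1 1 1 = 3 * pc η n := by
  have hs := Tmom_swap η n 0 0 0 0
  simp only [sw] at hs
  simp at hs
  rw [← hs]
  exact hT0000 η n

lemma hT0022 : Tmom η n 0 0 2 2 = qc η n := by
  have hs := Tmom_swap η n 0 0 2 2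
  simp only [sw] at hs
  simp at hs
  have he := e3' η n
  unfold qc
  linarith

lemma hT1122 : Tmom η n 1 1 2 2 = qc η n := by
  have hs := Tmom_swap η n 0 0 2 2
  simp only [sw] at hs
  simp at hs
  have h1 := hT0022 η n
  unfold qc at *
  linarith

lemma hT2222 : Tmom η n 2 2 2 2 = rc η n := by
  unfold Tmom rc A4
  refine integral_congr_ae (Filter.Eventually.of_forall fun m => ?_)
  dsimp only
  ring
lemma Tv0000 : Tmom η n 0 0 0 0 = 3 * pc η n := hT0000 η n

lemma Tv0001 : Tmom η n 0 0 0 1 = 0 :=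
  Tmom_zero η n 0 0 0 0 1 (by norm_num [sgn, Fin.ext_iff])

lemma Tv0002 : Tmom η n 0 0 0 2 = 0 :=
  Tmom_zero η n 0 0 0 0 2 (by norm_num [sgn, Fin.ext_iff])

lemma Tv0010 : Tmom η n 0 0 1 0 = 0 :=
  Tmom_zero η n 0 0 0 1 0 (by norm_num [sgn, Fin.ext_iff])

lemma Tv0011 : Tmom η n 0 0 1 1 = pc η n := hT0011 η n

lemma Tv0012 : Tmom η n 0 0 1 2 = 0 :=
  Tmom_zero η n 1 0 0 1 2 (by norm_num [sgn, Fin.ext_iff])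

lemma Tv0020 : Tmom η n 0 0 2 0 = 0 :=
  Tmom_zero η n 0 0 0 2 0 (by norm_num [sgn, Fin.ext_iff])

lemma Tv0021 : Tmom η n 0 0 2 1 = 0 :=
  Tmom_zero η n 1 0 0 2 1 (by norm_num [sgn, Fin.ext_iff])

lemma Tv0022 : Tmom η n 0 0 2 2 = qc η n := hT0022 η n

lemma Tv0100 : Tmom η n 0 1 0 0 = 0 :=
  Tmom_zero η n 0 0 1 0 0 (by norm_num [sgn, Fin.ext_iff])

lemma Tv0101 : Tmom η n 0 1 0 1 = pc η n := by
  have h : Tmom η n 0 1 0 1 = Tmom η n 0 0 1 1 := by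
    unfold Tmom
    exact integral_congr_ae (Filter.Eventually.of_forall fun m => by dsimp only; ring)
  rw [h, hT0011]

lemma Tv0102 : Tmom η n 0 1 0 2 = 0 :=
  Tmom_zero η n 1 0 1 0 2 (by norm_num [sgn, Fin.ext_iff])

lemma Tv0110 : Tmom η n 0 1 1 0 = pc η n := by
  have h : Tmom η n 0 1 1 0 = Tmom η n 0 0 1 1 := by
    unfold Tmom
    exact integral_congr_ae (Filter.Eventually.of_forall fun m => by dsimp only; ring)
  rw [h, hT0011]

lemma Tv0111 : Tmom η n 0 1 1 1 = 0 :=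
  Tmom_zero η n 0 0 1 1 1 (by norm_num [sgn, Fin.ext_iff])

lemma Tv0112 : Tmom η n 0 1 1 2 = 0 :=
  Tmom_zero η n 0 0 1 1 2 (by norm_num [sgn, Fin.ext_iff])

lemma Tv0120 : Tmom η n 0 1 2 0 = 0 :=
  Tmom_zero η n 1 0 1 2 0 (by norm_num [sgn, Fin.ext_iff])

lemma Tv0121 : Tmom η n 0 1 2 1 = 0 :=
  Tmom_zero η n 0 0 1 2 1 (by norm_num [sgn, Fin.ext_iff])

lemma Tv0122 : Tmom η n 0 1 2 2 = 0 :=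
  Tmom_zero η n 0 0 1 2 2 (by norm_num [sgn, Fin.ext_iff])

lemma Tv0200 : Tmom η n 0 2 0 0 = 0 :=
  Tmom_zero η n 0 0 2 0 0 (by norm_num [sgn, Fin.ext_iff])

lemma Tv0201 : Tmom η n 0 2 0 1 = 0 :=
  Tmom_zero η n 1 0 2 0 1 (by norm_num [sgn, Fin.ext_iff])

lemma Tv0202 : Tmom η n 0 2 0 2 = qc η n := by
  have h : Tmom η n 0 2 0 2 = Tmom η n 0 0 2 2 := by
    unfold Tmom
    exact integral_congr_ae (Filter.Eventually.of_forall fun m => by dsimp only; ring)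
  rw [h, hT0022]

lemma Tv0210 : Tmom η n 0 2 1 0 = 0 :=
  Tmom_zero η n 1 0 2 1 0 (by norm_num [sgn, Fin.ext_iff])

lemma Tv0211 : Tmom η n 0 2 1 1 = 0 :=
  Tmom_zero η n 0 0 2 1 1 (by norm_num [sgn, Fin.ext_iff])

lemma Tv0212 : Tmom η n 0 2 1 2 = 0 :=
  Tmom_zero η n 0 0 2 1 2 (by norm_num [sgn, Fin.ext_iff])

lemma Tv0220 : Tmom η n 0 2 2 0 = qc η n := by
  have h : Tmom η n 0 2 2 0 = Tmom η n 0 0 2 2 := by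
    unfold Tmom
    exact integral_congr_ae (Filter.Eventually.of_forall fun m => by dsimp only; ring)
  rw [h, hT0022]

lemma Tv0221 : Tmom η n 0 2 2 1 = 0 :=
  Tmom_zero η n 0 0 2 2 1 (by norm_num [sgn, Fin.ext_iff])

lemma Tv0222 : Tmom η n 0 2 2 2 = 0 :=
  Tmom_zero η n 0 0 2 2 2 (by norm_num [sgn, Fin.ext_iff])

lemma Tv1000 : Tmom η n 1 0 0 0 = 0 :=
  Tmom_zero η n 0 1 0 0 0 (by norm_num [sgn, Fin.ext_iff])

lemma Tv1001 : Tmom η n 1 0 0 1 = pc η n := by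
  have h : Tmom η n 1 0 0 1 = Tmom η n 0 0 1 1 := by
    unfold Tmom
    exact integral_congr_ae (Filter.Eventually.of_forall fun m => by dsimp only; ring)
  rw [h, hT0011]

lemma Tv1002 : Tmom η n 1 0 0 2 = 0 :=
  Tmom_zero η n 1 1 0 0 2 (by norm_num [sgn, Fin.ext_iff])

lemma Tv1010 : Tmom η n 1 0 1 0 = pc η n := by
  have h : Tmom η n 1 0 1 0 = Tmom η n 0 0 1 1 := by
    unfold Tmom
    exact integral_congr_ae (Filter.Eventually.of_forall fun m => by dsimp only; ring)
  rw [h, hT0011]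

lemma Tv1011 : Tmom η n 1 0 1 1 = 0 :=
  Tmom_zero η n 0 1 0 1 1 (by norm_num [sgn, Fin.ext_iff])

lemma Tv1012 : Tmom η n 1 0 1 2 = 0 :=
  Tmom_zero η n 0 1 0 1 2 (by norm_num [sgn, Fin.ext_iff])

lemma Tv1020 : Tmom η n 1 0 2 0 = 0 :=
  Tmom_zero η n 1 1 0 2 0 (by norm_num [sgn, Fin.ext_iff])

lemma Tv1021 : Tmom η n 1 0 2 1 = 0 :=
  Tmom_zero η n 0 1 0 2 1 (by norm_num [sgn, Fin.ext_iff])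

lemma Tv1022 : Tmom η n 1 0 2 2 = 0 :=
  Tmom_zero η n 0 1 0 2 2 (by norm_num [sgn, Fin.ext_iff])

lemma Tv1100 : Tmom η n 1 1 0 0 = pc η n := by
  have h : Tmom η n 1 1 0 0 = Tmom η n 0 0 1 1 := by
    unfold Tmom
    exact integral_congr_ae (Filter.Eventually.of_forall fun m => by dsimp only; ring)
  rw [h, hT0011]

lemma Tv1101 : Tmom η n 1 1 0 1 = 0 :=
  Tmom_zero η n 0 1 1 0 1 (by norm_num [sgn, Fin.ext_iff])

lemma Tv1102 : Tmom η n 1 1 0 2 = 0 :=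
  Tmom_zero η n 0 1 1 0 2 (by norm_num [sgn, Fin.ext_iff])

lemma Tv1110 : Tmom η n 1 1 1 0 = 0 :=
  Tmom_zero η n 0 1 1 1 0 (by norm_num [sgn, Fin.ext_iff])

lemma Tv1111 : Tmom η n 1 1 1 1 = 3 * pc η n := hT1111 η n

lemma Tv1112 : Tmom η n 1 1 1 2 = 0 :=
  Tmom_zero η n 1 1 1 1 2 (by norm_num [sgn, Fin.ext_iff])

lemma Tv1120 : Tmom η n 1 1 2 0 = 0 :=
  Tmom_zero η n 0 1 1 2 0 (by norm_num [sgn, Fin.ext_iff])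

lemma Tv1121 : Tmom η n 1 1 2 1 = 0 :=
  Tmom_zero η n 1 1 1 2 1 (by norm_num [sgn, Fin.ext_iff])

lemma Tv1122 : Tmom η n 1 1 2 2 = qc η n := hT1122 η n

lemma Tv1200 : Tmom η n 1 2 0 0 = 0 :=
  Tmom_zero η n 1 1 2 0 0 (by norm_num [sgn, Fin.ext_iff])

lemma Tv1201 : Tmom η n 1 2 0 1 = 0 :=
  Tmom_zero η n 0 1 2 0 1 (by norm_num [sgn, Fin.ext_iff])

lemma Tv1202 : Tmom η n 1 2 0 2 = 0 :=
  Tmom_zero η n 0 1 2 0 2 (by norm_num [sgn, Fin.ext_iff])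

lemma Tv1210 : Tmom η n 1 2 1 0 = 0 :=
  Tmom_zero η n 0 1 2 1 0 (by norm_num [sgn, Fin.ext_iff])

lemma Tv1211 : Tmom η n 1 2 1 1 = 0 :=
  Tmom_zero η n 1 1 2 1 1 (by norm_num [sgn, Fin.ext_iff])

lemma Tv1212 : Tmom η n 1 2 1 2 = qc η n := by
  have h : Tmom η n 1 2 1 2 = Tmom η n 1 1 2 2 := by
    unfold Tmom
    exact integral_congr_ae (Filter.Eventually.of_forall fun m => by dsimp only; ring)
  rw [h, hT1122]

lemma Tv1220 : Tmom η n 1 2 2 0 = 0 :=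
  Tmom_zero η n 0 1 2 2 0 (by norm_num [sgn, Fin.ext_iff])

lemma Tv1221 : Tmom η n 1 2 2 1 = qc η n := by
  have h : Tmom η n 1 2 2 1 = Tmom η n 1 1 2 2 := by
    unfold Tmom
    exact integral_congr_ae (Filter.Eventually.of_forall fun m => by dsimp only; ring)
  rw [h, hT1122]

lemma Tv1222 : Tmom η n 1 2 2 2 = 0 :=
  Tmom_zero η n 1 1 2 2 2 (by norm_num [sgn, Fin.ext_iff])

lemma Tv2000 : Tmom η n 2 0 0 0 = 0 :=
  Tmom_zero η n 0 2 0 0 0 (by norm_num [sgn, Fin.ext_iff])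

lemma Tv2001 : Tmom η n 2 0 0 1 = 0 :=
  Tmom_zero η n 1 2 0 0 1 (by norm_num [sgn, Fin.ext_iff])

lemma Tv2002 : Tmom η n 2 0 0 2 = qc η n := by
  have h : Tmom η n 2 0 0 2 = Tmom η n 0 0 2 2 := by
    unfold Tmom
    exact integral_congr_ae (Filter.Eventually.of_forall fun m => by dsimp only; ring)
  rw [h, hT0022]

lemma Tv2010 : Tmom η n 2 0 1 0 = 0 :=
  Tmom_zero η n 1 2 0 1 0 (by norm_num [sgn, Fin.ext_iff])

lemma Tv2011 : Tmom η n 2 0 1 1 = 0 :=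
  Tmom_zero η n 0 2 0 1 1 (by norm_num [sgn, Fin.ext_iff])

lemma Tv2012 : Tmom η n 2 0 1 2 = 0 :=
  Tmom_zero η n 0 2 0 1 2 (by norm_num [sgn, Fin.ext_iff])

lemma Tv2020 : Tmom η n 2 0 2 0 = qc η n := by
  have h : Tmom η n 2 0 2 0 = Tmom η n 0 0 2 2 := by
    unfold Tmom
    exact integral_congr_ae (Filter.Eventually.of_forall fun m => by dsimp only; ring)
  rw [h, hT0022]

lemma Tv2021 : Tmom η n 2 0 2 1 = 0 :=
  Tmom_zero η n 0 2 0 2 1 (by norm_num [sgn, Fin.ext_iff])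

lemma Tv2022 : Tmom η n 2 0 2 2 = 0 :=
  Tmom_zero η n 0 2 0 2 2 (by norm_num [sgn, Fin.ext_iff])

lemma Tv2100 : Tmom η n 2 1 0 0 = 0 :=
  Tmom_zero η n 1 2 1 0 0 (by norm_num [sgn, Fin.ext_iff])

lemma Tv2101 : Tmom η n 2 1 0 1 = 0 :=
  Tmom_zero η n 0 2 1 0 1 (by norm_num [sgn, Fin.ext_iff])

lemma Tv2102 : Tmom η n 2 1 0 2 = 0 :=
  Tmom_zero η n 0 2 1 0 2 (by norm_num [sgn, Fin.ext_iff])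

lemma Tv2110 : Tmom η n 2 1 1 0 = 0 :=
  Tmom_zero η n 0 2 1 1 0 (by norm_num [sgn, Fin.ext_iff])

lemma Tv2111 : Tmom η n 2 1 1 1 = 0 :=
  Tmom_zero η n 1 2 1 1 1 (by norm_num [sgn, Fin.ext_iff])

lemma Tv2112 : Tmom η n 2 1 1 2 = qc η n := by
  have h : Tmom η n 2 1 1 2 = Tmom η n 1 1 2 2 := by
    unfold Tmom
    exact integral_congr_ae (Filter.Eventually.of_forall fun m => by dsimp only; ring)
  rw [h, hT1122]

lemma Tv2120 : Tmom η n 2 1 2 0 = 0 :=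
  Tmom_zero η n 0 2 1 2 0 (by norm_num [sgn, Fin.ext_iff])

lemma Tv2121 : Tmom η n 2 1 2 1 = qc η n := by
  have h : Tmom η n 2 1 2 1 = Tmom η n 1 1 2 2 := by
    unfold Tmom
    exact integral_congr_ae (Filter.Eventually.of_forall fun m => by dsimp only; ring)
  rw [h, hT1122]

lemma Tv2122 : Tmom η n 2 1 2 2 = 0 :=
  Tmom_zero η n 1 2 1 2 2 (by norm_num [sgn, Fin.ext_iff])

lemma Tv2200 : Tmom η n 2 2 0 0 = qc η n := by
  have h : Tmom η n 2 2 0 0 = Tmom η n 0 0 2 2 := by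
    unfold Tmom
    exact integral_congr_ae (Filter.Eventually.of_forall fun m => by dsimp only; ring)
  rw [h, hT0022]

lemma Tv2201 : Tmom η n 2 2 0 1 = 0 :=
  Tmom_zero η n 0 2 2 0 1 (by norm_num [sgn, Fin.ext_iff])

lemma Tv2202 : Tmom η n 2 2 0 2 = 0 :=
  Tmom_zero η n 0 2 2 0 2 (by norm_num [sgn, Fin.ext_iff])

lemma Tv2210 : Tmom η n 2 2 1 0 = 0 :=
  Tmom_zero η n 0 2 2 1 0 (by norm_num [sgn, Fin.ext_iff])

lemma Tv2211 : Tmom η n 2 2 1 1 = qc η n := by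
  have h : Tmom η n 2 2 1 1 = Tmom η n 1 1 2 2 := by
    unfold Tmom
    exact integral_congr_ae (Filter.Eventually.of_forall fun m => by dsimp only; ring)
  rw [h, hT1122]

lemma Tv2212 : Tmom η n 2 2 1 2 = 0 :=
  Tmom_zero η n 1 2 2 1 2 (by norm_num [sgn, Fin.ext_iff])

lemma Tv2220 : Tmom η n 2 2 2 0 = 0 :=
  Tmom_zero η n 0 2 2 2 0 (by norm_num [sgn, Fin.ext_iff])

lemma Tv2221 : Tmom η n 2 2 2 1 = 0 :=
  Tmom_zero η n 1 2 2 2 1 (by norm_num [sgn, Fin.ext_iff])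

lemma Tv2222 : Tmom η n 2 2 2 2 = rc η n := hT2222 η n




variable (η : ℝ) (n : S2)

lemma hdens_smap (m : S2) : hdens η n (smap (Q n) m) = W η n m := by
  unfold hdens W Z
  rw [smap_coe, Qinner]

lemma contH : Continuous (hdens η n) := by
  unfold hdens
  apply Continuous.div_const
  exact Real.continuous_exp.comp (continuous_const.mul ((Continuous.pow
    (continuous_inner.comp ((continuous_subtype_val).prodMk continuous_const)) 2)))

lemma Sord2_eq : Sord2 η n = (3 * A2 η n - 1) / 2 := by
  have h0 : Sord2 η n = ∫ m : S2, P2 ((m : E3) 2) * W η n m ∂sigma3 := by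
    rw [Sord2, ← integral_smap (Q n)
      (fun m : S2 => P2 (inner ℝ (m : E3) (n : E3) : ℝ) * hdens η n m)]
    refine integral_congr_ae (Filter.Eventually.of_forall fun m => ?_)
    dsimp only
    rw [hdens_smap, smap_coe, Qinner]
  have hsplit := int2 (fun m : S2 => ((m : E3) 2) ^ 2 * W η n m) (W η n) (3/2) (-1/2)
    (intA2 η n) (intC (contW η n))
  have hpt : (fun m : S2 => P2 ((m : E3) 2) * W η n m) =
      (fun m : S2 => 3/2 * (((m : E3) 2) ^ 2 * W η n m) + (-1/2) * W η n m) := by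
    funext m; rw [P2]; ring
  rw [h0, hpt, hsplit]
  have hA := A0_one η n
  unfold A0 at hA
  unfold A2
  linarith [hA]

lemma Sord4_eq : Sord4 η n = (35 * A4 η n - 30 * A2 η n + 3) / 8 := by
  have h0 : Sord4 η n = ∫ m : S2, P4 ((m : E3) 2) * W η n m ∂sigma3 := by
    rw [Sord4, ← integral_smap (Q n)
      (fun m : S2 => P4 (inner ℝ (m : E3) (n : E3) : ℝ) * hdens η n m)]
    refine integral_congr_ae (Filter.Eventually.of_forall fun m => ?_)
    dsimp only
    rw [hdens_smap, smap_coe, Qinner]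
  have hsplit := int3 (fun m : S2 => ((m : E3) 2) ^ 4 * W η n m)
    (fun m : S2 => ((m : E3) 2) ^ 2 * W η n m) (W η n) (35/8) (-30/8) (3/8)
    (intA4 η n) (intA2 η n) (intC (contW η n))
  have hpt : (fun m : S2 => P4 ((m : E3) 2) * W η n m) =
      (fun m : S2 => 35/8 * (((m : E3) 2) ^ 4 * W η n m) +
        (-30/8) * (((m : E3) 2) ^ 2 * W η n m) + (3/8) * W η n m) := by
    funext m; rw [P4]; ring
  rw [h0, hpt, hsplit]
  have hA := A0_one η n
  unfold A0 at hA
  unfold A2 A4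
  linarith [hA]

def u (a : Fin 3) : E3 := (Q n).symm (EuclideanSpace.single a 1)

lemma u_orth (a b : Fin 3) :
    u n a 0 * u n b 0 + u n a 1 * u n b 1 + u n a 2 * u n b 2 = kron a b := by
  have h : (inner ℝ (u n a) (u n b) : ℝ) = kron a b := by
    rw [u, u, LinearIsometryEquiv.inner_map_map, EuclideanSpace.inner_single_right]
    simp [EuclideanSpace.single_apply, kron, eq_comm]
  rw [PiLp.inner_apply] at h
  simp only [RCLike.inner_apply, conj_trivial] at h
  rw [Fin.sum_univ_three] at h
  linarith

lemma u_n (a : Fin 3) : u n a 2 = (n : E3) a := by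
  have h : (inner ℝ (u n a) e2 : ℝ) = (n : E3) a := by
    rw [u, show e2 = (Q n).symm ((Q n) e2) from ((Q n).symm_apply_apply e2).symm,
      LinearIsometryEquiv.inner_map_map, Q_e2, EuclideanSpace.inner_single_left]
    simp
  rw [e2, EuclideanSpace.inner_single_right] at h
  simpa using h

lemma Qcomp (x : E3) (a : Fin 3) :
    (Q n x) a = x 0 * u n a 0 + x 1 * u n a 1 + x 2 * u n a 2 := by
  have h1 : (Q n x) a = (inner ℝ (Q n x) (EuclideanSpace.single a (1:ℝ)) : ℝ) := by
    rw [EuclideanSpace.inner_single_right]; simp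
  rw [h1, show EuclideanSpace.single a (1:ℝ) = (Q n) (u n a) from
    ((Q n).apply_symm_apply _).symm, LinearIsometryEquiv.inner_map_map, PiLp.inner_apply]
  simp only [RCLike.inner_apply, conj_trivial]
  rw [Fin.sum_univ_three]
  ring

lemma int_combF {ι : Type*} [Fintype ι] (g : ι → S2 → ℝ) (c : ι → ℝ)
    (hg : ∀ i, Integrable (g i) sigma3) :
    ∫ m, (∑ i, c i * g i m) ∂sigma3 = ∑ i, c i * ∫ m, g i m ∂sigma3 := by
  rw [integral_finset_sum _ (fun i _ => (hg i).const_mul (c i))]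
  exact Finset.sum_congr rfl fun i _ => integral_const_mul _ _

lemma main_expand (α β γ μ : Fin 3) :
    (∫ m : S2, (m : E3) α * (m : E3) β * (m : E3) γ * (m : E3) μ * hdens η n m ∂sigma3) =
    ∑ v : Fin 3 × Fin 3 × Fin 3 × Fin 3,
      (u n α v.1 * u n β v.2.1 * u n γ v.2.2.1 * u n μ v.2.2.2) *
        Tmom η n v.1 v.2.1 v.2.2.1 v.2.2.2 := by
  rw [← integral_smap (Q n)
    (fun m : S2 => (m : E3) α * (m : E3) β * (m : E3) γ * (m : E3) μ * hdens η n m)]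
  calc ∫ m : S2, (smap (Q n) m : E3) α * (smap (Q n) m : E3) β * (smap (Q n) m : E3) γ *
          (smap (Q n) m : E3) μ * hdens η n (smap (Q n) m) ∂sigma3
      = ∫ m : S2, ∑ v : Fin 3 × Fin 3 × Fin 3 × Fin 3,
          (u n α v.1 * u n β v.2.1 * u n γ v.2.2.1 * u n μ v.2.2.2) *
          ((m : E3) v.1 * (m : E3) v.2.1 * (m : E3) v.2.2.1 * (m : E3) v.2.2.2 * W η n m)
          ∂sigma3 := by
        refine integral_congr_ae (Filter.Eventually.of_forall fun m => ?_)
        dsimp only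
        rw [hdens_smap, smap_coe, Qcomp, Qcomp, Qcomp, Qcomp]
        simp only [Fintype.sum_prod_type, Fin.sum_univ_three]
        ring
    _ = ∑ v : Fin 3 × Fin 3 × Fin 3 × Fin 3,
          (u n α v.1 * u n β v.2.1 * u n γ v.2.2.1 * u n μ v.2.2.2) *
          ∫ m : S2, (m : E3) v.1 * (m : E3) v.2.1 * (m : E3) v.2.2.1 * (m : E3) v.2.2.2 *
            W η n m ∂sigma3 :=
        int_combF _ _ (fun v => intT η n v.1 v.2.1 v.2.2.1 v.2.2.2)
    _ = _ := Finset.sum_congr rfl fun v _ => rfl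

end Stmt16

/-- The fourth moment `M⁽⁴⁾_{αβγμ} = ∫ m_α m_β m_γ m_μ h_{η,n} dσ` equals
`S₄ n_α n_β n_γ n_μ + ((S₂ − S₄)/7)(n_α n_β δ_{γμ} + n_γ n_μ δ_{αβ} + n_α n_γ δ_{βμ}
+ n_β n_μ δ_{αγ} + n_α n_μ δ_{βγ} + n_β n_γ δ_{αμ})
+ (S₄/35 − 2S₂/21 + 1/15)(δ_{αβ}δ_{γμ} + δ_{αγ}δ_{βμ} + δ_{αμ}δ_{βγ})`. -/
theorem stmt16 (η : ℝ) (n : S2) (α β γ μ : Fin 3) :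
    ∫ m : S2, (m : E3) α * (m : E3) β * (m : E3) γ * (m : E3) μ * hdens η n m ∂sigma3 =
      Sord4 η n * ((n : E3) α * (n : E3) β * (n : E3) γ * (n : E3) μ) +
      (Sord2 η n - Sord4 η n) / 7 *
        ((n : E3) α * (n : E3) β * kron γ μ + (n : E3) γ * (n : E3) μ * kron α β +
         (n : E3) α * (n : E3) γ * kron β μ + (n : E3) β * (n : E3) μ * kron α γ +
         (n : E3) α * (n : E3) μ * kron β γ + (n : E3) β * (n : E3) γ * kron α μ) +
      (Sord4 η n / 35 - 2 * Sord2 η n / 21 + 1 / 15) *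
        (kron α β * kron γ μ + kron α γ * kron β μ + kron α μ * kron β γ) := by
  rw [Stmt16.main_expand η n α β γ μ]
  simp only [Fintype.sum_prod_type, Fin.sum_univ_three]
  simp only [Stmt16.Tv0000, Stmt16.Tv0001, Stmt16.Tv0002, Stmt16.Tv0010, Stmt16.Tv0011, Stmt16.Tv0012, Stmt16.Tv0020, Stmt16.Tv0021, Stmt16.Tv0022, Stmt16.Tv0100, Stmt16.Tv0101, Stmt16.Tv0102, Stmt16.Tv0110, Stmt16.Tv0111, Stmt16.Tv0112, Stmt16.Tv0120, Stmt16.Tv0121, Stmt16.Tv0122, Stmt16.Tv0200, Stmt16.Tv0201, Stmt16.Tv0202, Stmt16.Tv0210, Stmt16.Tv0211, Stmt16.Tv0212, Stmt16.Tv0220, Stmt16.Tv0221, Stmt16.Tv0222, Stmt16.Tv1000, Stmt16.Tv1001, Stmt16.Tv1002, Stmt16.Tv1010, Stmt16.Tv1011, Stmt16.Tv1012, Stmt16.Tv1020, Stmt16.Tv1021, Stmt16.Tv1022, Stmt16.Tv1100, Stmt16.Tv1101, Stmt16.Tv1102, Stmt16.Tv1110, Stmt16.Tv1111, Stmt16.Tv1112,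 Stmt16.Tv1120, Stmt16.Tv1121, Stmt16.Tv1122, Stmt16.Tv1200, Stmt16.Tv1201, Stmt16.Tv1202, Stmt16.Tv1210, Stmt16.Tv1211, Stmt16.Tv1212, Stmt16.Tv1220, Stmt16.Tv1221, Stmt16.Tv1222, Stmt16.Tv2000, Stmt16.Tv2001, Stmt16.Tv2002, Stmt16.Tv2010, Stmt16.Tv2011, Stmt16.Tv2012, Stmt16.Tv2020, Stmt16.Tv2021, Stmt16.Tv2022, Stmt16.Tv2100, Stmt16.Tv2101, Stmt16.Tv2102, Stmt16.Tv2110, Stmt16.Tv2111, Stmt16.Tv2112, Stmt16.Tv2120, Stmt16.Tv2121, Stmt16.Tv2122, Stmt16.Tv2200, Stmt16.Tv2201, Stmt16.Tv2202, Stmt16.Tv2210, Stmt16.Tv2211, Stmt16.Tv2212, Stmt16.Tv2220, Stmt16.Tv2221, Stmt16.Tv2222]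
  rw [Stmt16.Sord2_eq, Stmt16.Sord4_eq]
  rw [← Stmt16.u_orth n α β, ← Stmt16.u_orth n γ μ, ← Stmt16.u_orth n α γ, ← Stmt16.u_orth n β μ,
    ← Stmt16.u_orth n α μ, ← Stmt16.u_orth n β γ]
  rw [← Stmt16.u_n n α, ← Stmt16.u_n n β, ← Stmt16.u_n n γ, ← Stmt16.u_n n μ]
  simp only [Stmt16.pc, Stmt16.qc, Stmt16.rc]
  ring
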